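/- Fix k ≥ 1, εᵢ ≥ 0 and δᵢ ∈ [0,1] for i = 1,…,k. Let P_{1:k} and Q_{1:k} be joint probability measures on Ω₁ × ⋯ × Ω_k built adaptively from initial laws and Markov kernels such that for every i and every history x_{<i}, the conditional output distributions satisfy δ_{P_i^{x_{<i}}|Q_i^{x_{<i}}}(εᵢ) ≤ δᵢ and δ_{Q_i^{x_{<i}}|P_i^{x_{<i}}}(εᵢ) ≤ δᵢ. Define δ^{⊗0}(t) := max(0, 1 − e^t) and recursively δ^{⊗l}(t) := δ_l + ((1−δ_l)/(e^{ε_l}+1)) · [ e^{ε_l} · δ^{⊗(l−1)}(t − ε_l) + δ^{⊗(l−1)}(t + ε_l) ]. Then for every t ∈ ℝ, δ_{P_{1:k}|Q_{1:k}}(t) ≤ δ^{⊗k}(t). -/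

import Mathlib

open MeasureTheory ProbabilityTheory

/-- The privacy profile `δ_{P|Q}(ε) := sup { P(S) − e^ε · Q(S) : S measurable }`. -/
noncomputable def privProfile {Ω : Type*} [MeasurableSpace Ω]
    (P Q : Measure Ω) (ε : ℝ) : ℝ :=
  ⨆ S : {S : Set Ω // MeasurableSet S}, ((P S.1).toReal - Real.exp ε * (Q S.1).toReal)

/-- The joint law of `n` adaptively composed mechanisms: `κ i` gives the law of the
`i`-th output (0-indexed) conditioned on the history of the preceding `i` outputs;
in particular `κ 0` is the initial law. -/
noncomputable def adaptiveJoint {Ω : Type*} [MeasurableSpace Ω]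
    (κ : (n : ℕ) → Kernel (Fin n → Ω) Ω) : (n : ℕ) → Measure (Fin n → Ω)
  | 0 => Measure.dirac (fun i => i.elim0)
  | n + 1 =>
      ((adaptiveJoint κ n) ⊗ₘ (κ n)).map (fun p : (Fin n → Ω) × Ω => Fin.snoc p.1 p.2)

/-- The recursively composed privacy-profile bound `δ^{⊗l}`, where the `l`-fold bound
uses the parameters `ε (l-1), δ (l-1)` of the last mechanism (0-indexed). -/
noncomputable def composedBound (ε δ : ℕ → ℝ) : ℕ → ℝ → ℝ
  | 0, t => max 0 (1 - Real.exp t)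
  | l + 1, t =>
      δ l + ((1 - δ l) / (Real.exp (ε l) + 1)) *
        (Real.exp (ε l) * composedBound ε δ l (t - ε l) + composedBound ε δ l (t + ε l))

section PrivProfileBasic

variable {Ω : Type*} [MeasurableSpace Ω] (P Q : Measure Ω) [IsProbabilityMeasure P]
  [IsProbabilityMeasure Q] (ε : ℝ)

lemma privProfile_bddAbove : BddAbove (Set.range fun S : {S : Set Ω // MeasurableSet S} =>
    ((P S.1).toReal - Real.exp ε * (Q S.1).toReal)) := by
  refine ⟨1, ?_⟩
  rintro x ⟨S, rfl⟩
  dsimp only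
  have h1 : (P S.1).toReal ≤ 1 := by
    simpa using ENNReal.toReal_mono (by simp) (prob_le_one (μ := P) (s := S.1))
  have h2 : 0 ≤ Real.exp ε * (Q S.1).toReal := by positivity
  linarith

lemma le_privProfile {S : Set Ω} (hS : MeasurableSet S) :
    (P S).toReal - Real.exp ε * (Q S).toReal ≤ privProfile P Q ε :=
  le_ciSup (privProfile_bddAbove P Q ε) ⟨S, hS⟩

lemma privProfile_map_le {Ω' : Type*} [MeasurableSpace Ω'] {f : Ω → Ω'} (hf : Measurable f) :
    privProfile (P.map f) (Q.map f) ε ≤ privProfile P Q ε := by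
  refine ciSup_le fun S => ?_
  rw [Measure.map_apply hf S.2, Measure.map_apply hf S.2]
  exact le_privProfile P Q ε (hf S.2)

/-- Layer-cake comparison: for a `[0,1]`-valued measurable function, the "expected value gap"
is bounded by the privacy profile. -/
lemma integral_le_privProfile {f : Ω → ℝ} (hf : Measurable f)
    (hf0 : ∀ x, 0 ≤ f x) (hf1 : ∀ x, f x ≤ 1) :
    ∫ x, f x ∂P - Real.exp ε * ∫ x, f x ∂Q ≤ privProfile P Q ε := by
  have hbd : ∀ (μ : Measure Ω) [IsProbabilityMeasure μ], Integrable f μ := by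
    intro μ _
    refine (integrable_const (1:ℝ)).mono' hf.aestronglyMeasurable ?_
    exact ae_of_all _ fun x => by rw [Real.norm_eq_abs, abs_of_nonneg (hf0 x)]; exact hf1 x
  have hmeas : ∀ (μ : Measure Ω), Measurable fun u : ℝ => (μ {x | u < f x}).toReal := by
    intro μ
    refine Measurable.ennreal_toReal ?_
    exact Antitone.measurable fun s t hst => measure_mono fun x hx => lt_of_le_of_lt hst hx
  have hzero : ∀ u : ℝ, 1 < u → {x : Ω | u < f x} = ∅ := by
    intro u hu
    ext x; simp only [Set.mem_setOf_eq, Set.mem_empty_iff_false, iff_false, not_lt]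
    exact le_trans (hf1 x) hu.le
  have hint : ∀ (μ : Measure Ω) [IsProbabilityMeasure μ],
      IntegrableOn (fun u => (μ {x | u < f x}).toReal) (Set.Ioi 0) volume := by
    intro μ _
    have hind : Integrable ((Set.Ioc (0:ℝ) 1).indicator fun _ => (1:ℝ)) volume :=
      (integrable_indicator_iff measurableSet_Ioc).2
        (integrableOn_const (by simp) (by simp))
    refine Integrable.mono' (hind.restrict (s := Set.Ioi 0))
      ((hmeas μ).aestronglyMeasurable.restrict) ?_
    rw [ae_restrict_iff' measurableSet_Ioi]
    refine ae_of_all _ fun u hu => ?_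
    rcases le_or_gt u 1 with h1 | h1
    · have : (Set.Ioc (0:ℝ) 1).indicator (fun _ => (1:ℝ)) u = 1 :=
        Set.indicator_of_mem (Set.mem_Ioc.mpr ⟨hu, h1⟩) _
      rw [this, Real.norm_eq_abs, abs_of_nonneg ENNReal.toReal_nonneg]
      exact ENNReal.toReal_le_of_le_ofReal zero_le_one (by simpa using prob_le_one)
    · rw [hzero u h1]
      simp [Set.indicator_apply_nonneg]
  have hrepr : ∀ (μ : Measure Ω) [IsProbabilityMeasure μ],
      ∫ x, f x ∂μ = ∫ u in Set.Ioi 0, (μ {x | u < f x}).toReal := by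
    intro μ _
    exact (hbd μ).integral_eq_integral_meas_lt (ae_of_all _ hf0)
  have hind : Integrable ((Set.Ioc (0:ℝ) 1).indicator fun _ => privProfile P Q ε) volume :=
    (integrable_indicator_iff measurableSet_Ioc).2
      (integrableOn_const (by simp) (by simp))
  rw [hrepr P, hrepr Q, ← integral_const_mul, ← integral_sub (hint P) ((hint Q).const_mul (Real.exp ε))]
  have hle : ∀ᵐ u ∂(volume.restrict (Set.Ioi 0)),
      (P {x | u < f x}).toReal - Real.exp ε * (Q {x | u < f x}).toReal ≤
        (Set.Ioc (0:ℝ) 1).indicator (fun _ => privProfile P Q ε) u := by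
    rw [ae_restrict_iff' measurableSet_Ioi]
    refine ae_of_all _ fun u hu => ?_
    rcases le_or_gt u 1 with h1 | h1
    · rw [Set.indicator_of_mem (Set.mem_Ioc.mpr ⟨hu, h1⟩)]
      exact le_privProfile P Q ε (hf measurableSet_Ioi : MeasurableSet {x | u < f x})
    · rw [Set.indicator_of_notMem (fun h => absurd h.2 (not_le.mpr h1))]
      simp [hzero u h1]
  refine le_trans (integral_mono_ae (Integrable.sub (hint P)
    ((hint Q).const_mul (Real.exp ε))) hind.restrict hle) ?_
  rw [integral_indicator measurableSet_Ioc]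
  rw [Measure.restrict_restrict measurableSet_Ioc]
  have hIoc : Set.Ioc (0:ℝ) 1 ∩ Set.Ioi 0 = Set.Ioc 0 1 := by
    ext x
    simp only [Set.mem_inter_iff, Set.mem_Ioc, Set.mem_Ioi, and_iff_left_iff_imp]
    exact fun h => h.1
  rw [hIoc, setIntegral_const]
  simp

end PrivProfileBasic

/-- The "amount of the first canonical component" used to split a conditional probability. -/
noncomputable def uFun (E c δ a : ℝ) : ℝ := min 1 (max 0 ((a - δ) / (c * E)))
/-- The "amount of the second canonical component" used to split a conditional probability. -/
noncomputable def vFun (E c δ a : ℝ) : ℝ := max 0 (min 1 ((a - δ) / c - E))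

lemma uFun_mem (E c δ a : ℝ) : uFun E c δ a ∈ Set.Icc (0:ℝ) 1 :=
  ⟨le_min zero_le_one (le_max_left _ _), min_le_left _ _⟩

lemma vFun_mem (E c δ a : ℝ) : vFun E c δ a ∈ Set.Icc (0:ℝ) 1 := by
  constructor
  · exact le_max_left _ _
  · rcases le_or_gt ((a - δ) / c - E) 0 with h | h
    · simp [vFun, max_eq_left (le_trans (min_le_right _ _) h)]
    · exact max_le zero_le_one (min_le_left _ _)

lemma continuous_uFun (E c δ : ℝ) : Continuous fun a => uFun E c δ a := by
  unfold uFun; fun_prop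

lemma continuous_vFun (E c δ : ℝ) : Continuous fun a => vFun E c δ a := by
  unfold vFun; fun_prop

/-- The key pointwise inequality: a pair `(a, b)` of conditional probabilities satisfying the
two-sided `(ε, δ)` constraints can be dominated through the canonical randomized-response
decomposition with weights `uFun`/`vFun`. -/
lemma key_pointwise {ε δ a b : ℝ} (hε : 0 ≤ ε) (hδ0 : 0 ≤ δ) (hδ1 : δ ≤ 1)
    (ha1 : a ≤ 1) (hb0 : 0 ≤ b)
    (hC1 : a - Real.exp ε * b ≤ δ)
    (hC4 : (1 - b) - Real.exp ε * (1 - a) ≤ δ) :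
    a ≤ δ + ((1 - δ) / (Real.exp ε + 1)) *
        (Real.exp ε * uFun (Real.exp ε) ((1 - δ) / (Real.exp ε + 1)) δ a
          + vFun (Real.exp ε) ((1 - δ) / (Real.exp ε + 1)) δ a) ∧
      ((1 - δ) / (Real.exp ε + 1)) *
        (uFun (Real.exp ε) ((1 - δ) / (Real.exp ε + 1)) δ a
          + Real.exp ε * vFun (Real.exp ε) ((1 - δ) / (Real.exp ε + 1)) δ a) ≤ b := by
  set E := Real.exp ε with hEdef
  have hE1 : 1 ≤ E := by simpa [hEdef] using Real.one_le_exp hε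
  have hE0 : 0 < E := lt_of_lt_of_le one_pos hE1
  set c := (1 - δ) / (E + 1) with hcdef
  have hc0 : 0 ≤ c := div_nonneg (by linarith) (by linarith)
  have hcsum : c * (E + 1) = 1 - δ := by rw [hcdef]; exact div_mul_cancel₀ _ (by linarith)
  rcases eq_or_lt_of_le hc0 with hc | hc
  · -- c = 0, so δ = 1
    have hδ : δ = 1 := by rw [← hc] at hcsum; linarith
    have hu : uFun E c δ a = 0 := by simp [uFun, ← hc, hδ, div_nonpos_iff]
    have hv : vFun E c δ a = 0 := by
      have : min 1 ((a - δ) / c - E) ≤ 0 := by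
        refine le_trans (min_le_right _ _) ?_
        rw [← hc]; simp; linarith
      simp [vFun, max_eq_left this]
    rw [hu, hv, ← hc]
    constructor <;> [linarith; linarith]
  · have hcne : c ≠ 0 := ne_of_gt hc
    rcases le_or_gt a δ with haδ | haδ
    · have hu : uFun E c δ a = 0 := by
        have : (a - δ) / (c * E) ≤ 0 := div_nonpos_of_nonpos_of_nonneg (by linarith) (by positivity)
        simp [uFun, max_eq_left this]
      have hv : vFun E c δ a = 0 := by
        have : min 1 ((a - δ) / c - E) ≤ 0 := by
          refine le_trans (min_le_right _ _) ?_
          have : (a - δ) / c ≤ 0 := div_nonpos_of_nonpos_of_nonneg (by linarith) hc0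
          linarith
        simp [vFun, max_eq_left this]
      rw [hu, hv]
      constructor <;> [linarith; linarith]
    · rcases le_or_gt (a - δ) (c * E) with hsm | hsm
      · -- u = (a-δ)/(cE), v = 0
        have hcE : (0:ℝ) < c * E := by positivity
        have hu : uFun E c δ a = (a - δ) / (c * E) := by
          have h1 : (a - δ) / (c * E) ≤ 1 := (div_le_one hcE).mpr hsm
          have h0 : 0 ≤ (a - δ) / (c * E) := div_nonneg (by linarith) hcE.le
          simp [uFun, max_eq_right h0, min_eq_right h1]
        have hv : vFun E c δ a = 0 := by
          have : min 1 ((a - δ) / c - E) ≤ 0 := by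
            refine le_trans (min_le_right _ _) ?_
            have : (a - δ) / c ≤ E := (div_le_iff₀ hc).mpr (by linarith [mul_comm c E])
            linarith
          simp [vFun, max_eq_left this]
        rw [hu, hv]
        have hcancel : c * (E * ((a - δ) / (c * E))) = a - δ := by
          field_simp
        constructor
        · rw [mul_add, hcancel]; linarith
        · rw [mul_zero, add_zero]
          have h2 : c * ((a - δ) / (c * E)) = (a - δ) / E := by
            field_simp
          rw [h2, div_le_iff₀ hE0]
          nlinarith [hC1]
      · -- u = 1, v = (a-δ)/c - E
        set w := (a - δ) / c with hwdef
        have hw : c * w = a - δ := by rw [hwdef]; field_simp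
        have hu : uFun E c δ a = 1 := by
          have h1 : (1:ℝ) ≤ (a - δ) / (c * E) := by
            rw [le_div_iff₀ (by positivity)]; linarith
          rw [uFun, max_eq_right (le_trans zero_le_one h1), min_eq_left h1]
        have hwle : w ≤ E + 1 := by
          rw [hwdef, div_le_iff₀ hc]; nlinarith [hcsum]
        have hwge : E ≤ w := by
          rw [hwdef, le_div_iff₀ hc]; nlinarith
        have hv : vFun E c δ a = w - E := by
          have h1 : w - E ≤ 1 := by linarith
          have h0 : 0 ≤ w - E := by linarith
          rw [vFun, ← hwdef, min_eq_right h1, max_eq_right h0]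
        rw [hu, hv]
        constructor
        · nlinarith [hw]
        · nlinarith [hw, hcsum, hC4]

lemma integrable01 {Ω : Type*} [MeasurableSpace Ω] (μ : Measure Ω) [IsProbabilityMeasure μ]
    {f : Ω → ℝ} (hf : Measurable f) (hf0 : ∀ x, 0 ≤ f x) (hf1 : ∀ x, f x ≤ 1) :
    Integrable f μ := by
  refine (integrable_const (1:ℝ)).mono' hf.aestronglyMeasurable ?_
  exact ae_of_all _ fun x => by rw [Real.norm_eq_abs, abs_of_nonneg (hf0 x)]; exact hf1 x

/-- One step of the tight adaptive composition: the advanced-joint-convexity bound for the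
composition of joint laws with one extra adaptively chosen mechanism. -/
lemma step_bound {X Ω : Type*} [MeasurableSpace X] [MeasurableSpace Ω]
    (P Q : Measure X) [IsProbabilityMeasure P] [IsProbabilityMeasure Q]
    (κ η : Kernel X Ω) [IsMarkovKernel κ] [IsMarkovKernel η]
    {ε δ : ℝ} (hε : 0 ≤ ε) (hδ0 : 0 ≤ δ) (hδ1 : δ ≤ 1)
    (hκη : ∀ x, privProfile (κ x) (η x) ε ≤ δ)
    (hηκ : ∀ x, privProfile (η x) (κ x) ε ≤ δ) (t : ℝ) :
    privProfile (P ⊗ₘ κ) (Q ⊗ₘ η) t ≤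
      δ + ((1 - δ) / (Real.exp ε + 1)) *
        (Real.exp ε * privProfile P Q (t - ε) + privProfile P Q (t + ε)) := by
  set E := Real.exp ε with hEdef
  set c := (1 - δ) / (E + 1) with hcdef
  have hE0 : 0 < E := Real.exp_pos ε
  have hc0 : 0 ≤ c := div_nonneg (by linarith) (by linarith)
  refine ciSup_le fun S => ?_
  obtain ⟨S, hS⟩ := S
  dsimp only
  set a : X → ℝ := fun x => ((κ x) (Prod.mk x ⁻¹' S)).toReal with ha
  set b : X → ℝ := fun x => ((η x) (Prod.mk x ⁻¹' S)).toReal with hb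
  have haM : Measurable a := (Kernel.measurable_kernel_prodMk_left hS).ennreal_toReal
  have hbM : Measurable b := (Kernel.measurable_kernel_prodMk_left hS).ennreal_toReal
  have ha01 : ∀ x, 0 ≤ a x ∧ a x ≤ 1 := fun x =>
    ⟨ENNReal.toReal_nonneg, by
      simpa using ENNReal.toReal_mono (by simp) (prob_le_one (μ := κ x) (s := _))⟩
  have hb01 : ∀ x, 0 ≤ b x ∧ b x ≤ 1 := fun x =>
    ⟨ENNReal.toReal_nonneg, by
      simpa using ENNReal.toReal_mono (by simp) (prob_le_one (μ := η x) (s := _))⟩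
  -- rewrite the compProd measures as integrals
  have hPa : ((P ⊗ₘ κ) S).toReal = ∫ x, a x ∂P := by
    rw [Measure.compProd_apply hS]
    exact (integral_toReal (Kernel.measurable_kernel_prodMk_left hS).aemeasurable
      (ae_of_all _ fun x => measure_lt_top _ _)).symm
  have hQb : ((Q ⊗ₘ η) S).toReal = ∫ x, b x ∂Q := by
    rw [Measure.compProd_apply hS]
    exact (integral_toReal (Kernel.measurable_kernel_prodMk_left hS).aemeasurable
      (ae_of_all _ fun x => measure_lt_top _ _)).symm
  rw [hPa, hQb]
  -- pointwise constraints and the canonical decomposition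
  have hkey : ∀ x, a x ≤ δ + c * (E * uFun E c δ (a x) + vFun E c δ (a x)) ∧
      c * (uFun E c δ (a x) + E * vFun E c δ (a x)) ≤ b x := by
    intro x
    have hC1 : a x - E * b x ≤ δ :=
      le_trans (le_privProfile (κ x) (η x) ε (measurable_prodMk_left hS)) (hκη x)
    have hC4 : (1 - b x) - E * (1 - a x) ≤ δ := by
      have h1 : ((η x) (Prod.mk x ⁻¹' S)ᶜ).toReal = 1 - b x := by
        rw [prob_compl_eq_one_sub (measurable_prodMk_left hS)]
        rw [ENNReal.toReal_sub_of_le prob_le_one ENNReal.one_ne_top]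
        simp [hb]
      have h2 : ((κ x) (Prod.mk x ⁻¹' S)ᶜ).toReal = 1 - a x := by
        rw [prob_compl_eq_one_sub (measurable_prodMk_left hS)]
        rw [ENNReal.toReal_sub_of_le prob_le_one ENNReal.one_ne_top]
        simp [ha]
      rw [← h1, ← h2]
      exact le_trans (le_privProfile (η x) (κ x) ε (measurable_prodMk_left hS).compl) (hηκ x)
    exact key_pointwise hε hδ0 hδ1 (ha01 x).2 (hb01 x).1 hC1 hC4
  set f₁ : X → ℝ := fun x => uFun E c δ (a x) with hf₁
  set f₂ : X → ℝ := fun x => vFun E c δ (a x) with hf₂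
  have hf₁M : Measurable f₁ := (continuous_uFun E c δ).measurable.comp haM
  have hf₂M : Measurable f₂ := (continuous_vFun E c δ).measurable.comp haM
  have hf₁01 : ∀ x, 0 ≤ f₁ x ∧ f₁ x ≤ 1 := fun x => ⟨(uFun_mem _ _ _ _).1, (uFun_mem _ _ _ _).2⟩
  have hf₂01 : ∀ x, 0 ≤ f₂ x ∧ f₂ x ≤ 1 := fun x => ⟨(vFun_mem _ _ _ _).1, (vFun_mem _ _ _ _).2⟩
  have int_f1P := integrable01 P hf₁M (fun x => (hf₁01 x).1) (fun x => (hf₁01 x).2)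
  have int_f2P := integrable01 P hf₂M (fun x => (hf₂01 x).1) (fun x => (hf₂01 x).2)
  have int_f1Q := integrable01 Q hf₁M (fun x => (hf₁01 x).1) (fun x => (hf₁01 x).2)
  have int_f2Q := integrable01 Q hf₂M (fun x => (hf₂01 x).1) (fun x => (hf₂01 x).2)
  have int_aP := integrable01 P haM (fun x => (ha01 x).1) (fun x => (ha01 x).2)
  have int_bQ := integrable01 Q hbM (fun x => (hb01 x).1) (fun x => (hb01 x).2)
  -- integrate the pointwise inequalities
  have intg2 : Integrable (fun x => c * (E * f₁ x + f₂ x)) P :=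
    ((int_f1P.const_mul E).add int_f2P).const_mul c
  have h1 : ∫ x, a x ∂P ≤ δ + c * (E * ∫ x, f₁ x ∂P + ∫ x, f₂ x ∂P) := by
    have hm := integral_mono (f := a) (g := fun x => δ + c * (E * f₁ x + f₂ x)) int_aP
      ((integrable_const δ).add intg2) (fun x => (hkey x).1)
    have he : ∫ x, (δ + c * (E * f₁ x + f₂ x)) ∂P
        = δ + c * (E * ∫ x, f₁ x ∂P + ∫ x, f₂ x ∂P) := by
      rw [integral_add (integrable_const δ) intg2, integral_const, probReal_univ,
        smul_eq_mul, one_mul, integral_const_mul,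
        integral_add (int_f1P.const_mul E) int_f2P, integral_const_mul]
    rwa [he] at hm
  have h2 : c * (∫ x, f₁ x ∂Q + E * ∫ x, f₂ x ∂Q) ≤ ∫ x, b x ∂Q := by
    have hm := integral_mono (f := fun x => c * (f₁ x + E * f₂ x)) (g := b)
      ((int_f1Q.add (int_f2Q.const_mul E)).const_mul c) int_bQ (fun x => (hkey x).2)
    have he : ∫ x, c * (f₁ x + E * f₂ x) ∂Q
        = c * (∫ x, f₁ x ∂Q + E * ∫ x, f₂ x ∂Q) := by
      rw [integral_const_mul, integral_add int_f1Q (int_f2Q.const_mul E), integral_const_mul]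
    rwa [he] at hm
  have hexp1 : E * Real.exp (t - ε) = Real.exp t := by
    rw [hEdef, ← Real.exp_add]; ring_nf
  have hexp2 : Real.exp (t + ε) = Real.exp t * E := by
    rw [hEdef, ← Real.exp_add]
  have hA1 : ∫ x, f₁ x ∂P - Real.exp (t - ε) * ∫ x, f₁ x ∂Q ≤ privProfile P Q (t - ε) :=
    integral_le_privProfile P Q _ hf₁M (fun x => (hf₁01 x).1) (fun x => (hf₁01 x).2)
  have hA2 : ∫ x, f₂ x ∂P - Real.exp (t + ε) * ∫ x, f₂ x ∂Q ≤ privProfile P Q (t + ε) :=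
    integral_le_privProfile P Q _ hf₂M (fun x => (hf₂01 x).1) (fun x => (hf₂01 x).2)
  have hcE : 0 ≤ c * E := by positivity
  calc ∫ x, a x ∂P - Real.exp t * ∫ x, b x ∂Q
      ≤ (δ + c * (E * ∫ x, f₁ x ∂P + ∫ x, f₂ x ∂P))
        - Real.exp t * (c * (∫ x, f₁ x ∂Q + E * ∫ x, f₂ x ∂Q)) := by
        have := mul_le_mul_of_nonneg_left h2 (Real.exp_pos t).le
        linarith
    _ = δ + (c * E) * ((∫ x, f₁ x ∂P) - Real.exp (t - ε) * ∫ x, f₁ x ∂Q)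
        + c * ((∫ x, f₂ x ∂P) - Real.exp (t + ε) * ∫ x, f₂ x ∂Q) := by
        rw [hexp2, ← hexp1]; ring
    _ ≤ δ + (c * E) * privProfile P Q (t - ε) + c * privProfile P Q (t + ε) := by
        have := mul_le_mul_of_nonneg_left hA1 hcE
        have := mul_le_mul_of_nonneg_left hA2 hc0
        linarith
    _ = δ + c * (E * privProfile P Q (t - ε) + privProfile P Q (t + ε)) := by ring

section Structural

variable {Ω : Type*} [MeasurableSpace Ω]

lemma measurable_snocFun {n : ℕ} :
    Measurable (fun p : (Fin n → Ω) × Ω => (Fin.snoc p.1 p.2 : Fin (n+1) → Ω)) := by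
  refine measurable_pi_lambda _ fun i => ?_
  induction i using Fin.lastCases with
  | last =>
      simpa [Fin.snoc_last] using (measurable_snd : Measurable fun p : (Fin n → Ω) × Ω => p.2)
  | cast j =>
      have : (fun p : (Fin n → Ω) × Ω => (Fin.snoc p.1 p.2 : Fin (n+1) → Ω) (Fin.castSucc j))
          = fun p => p.1 j := by
        funext p; simp [Fin.snoc_castSucc]
      rw [this]
      exact (measurable_pi_apply j).comp measurable_fst

lemma adaptiveJoint_isProb (κ : (n : ℕ) → Kernel (Fin n → Ω) Ω)
    (hκ : ∀ n, IsMarkovKernel (κ n)) : ∀ n, IsProbabilityMeasure (adaptiveJoint κ n) := by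
  intro n
  induction n with
  | zero => rw [adaptiveJoint]; infer_instance
  | succ n ih =>
      rw [adaptiveJoint]
      haveI := hκ n
      haveI := ih
      exact Measure.isProbabilityMeasure_map measurable_snocFun.aemeasurable

end Structural

theorem tight_adaptive_composition {Ω : Type*} [MeasurableSpace Ω]
    (k : ℕ) (hk : 1 ≤ k) (ε δ : ℕ → ℝ)
    (hε : ∀ i, 0 ≤ ε i) (hδ : ∀ i, δ i ∈ Set.Icc (0 : ℝ) 1)
    (κP κQ : (n : ℕ) → Kernel (Fin n → Ω) Ω)
    (hP : ∀ n, IsMarkovKernel (κP n)) (hQ : ∀ n, IsMarkovKernel (κQ n))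
    (hdom : ∀ n < k, ∀ x : Fin n → Ω,
      privProfile (κP n x) (κQ n x) (ε n) ≤ δ n ∧
      privProfile (κQ n x) (κP n x) (ε n) ≤ δ n)
    (t : ℝ) :
    privProfile (adaptiveJoint κP k) (adaptiveJoint κQ k) t ≤ composedBound ε δ k t := by
  clear hk
  induction k generalizing t with
  | zero =>
      rw [adaptiveJoint, adaptiveJoint, composedBound]
      refine ciSup_le fun S => ?_
      obtain ⟨S, hS⟩ := S
      dsimp only
      rw [Measure.dirac_apply' _ hS]
      by_cases hz : (fun i : Fin 0 => i.elim0) ∈ S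
      · rw [Set.indicator_of_mem hz]
        simpa using le_max_right (0:ℝ) (1 - Real.exp t)
      · rw [Set.indicator_of_notMem hz]
        simpa using le_max_left (0:ℝ) (1 - Real.exp t)
  | succ k ih =>
      haveI := hP k
      haveI := hQ k
      haveI := adaptiveJoint_isProb κP hP k
      haveI := adaptiveJoint_isProb κQ hQ k
      rw [adaptiveJoint, adaptiveJoint, composedBound]
      refine le_trans (privProfile_map_le _ _ _ measurable_snocFun) ?_
      refine le_trans (step_bound (adaptiveJoint κP k) (adaptiveJoint κQ k) (κP k) (κQ k)
        (hε k) (hδ k).1 (hδ k).2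
        (fun x => (hdom k (Nat.lt_succ_self k) x).1)
        (fun x => (hdom k (Nat.lt_succ_self k) x).2) t) ?_
      have hc0 : 0 ≤ (1 - δ k) / (Real.exp (ε k) + 1) := by
        have := (hδ k).2
        have := Real.exp_pos (ε k)
        apply div_nonneg <;> linarith
      have hE0 : 0 ≤ Real.exp (ε k) := (Real.exp_pos _).le
      have hdom' : ∀ n < k, ∀ x : Fin n → Ω,
          privProfile (κP n x) (κQ n x) (ε n) ≤ δ n ∧
          privProfile (κQ n x) (κP n x) (ε n) ≤ δ n :=
        fun n hn => hdom n (hn.trans (Nat.lt_succ_self k))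
      have h1 := ih hdom' (t - ε k)
      have h2 := ih hdom' (t + ε k)
      have := mul_le_mul_of_nonneg_left h1 (mul_nonneg hc0 hE0)
      have := mul_le_mul_of_nonneg_left h2 hc0
      nlinarith
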